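/- Let k ≥ 2 be an integer and let a ∈ {−1, 1}. If u : ℝ → ℝ is twice continuously differentiable, satisfies u''(z) = −u(z) + a·u(z)^k for all z ∈ ℝ, and u(z) → 0 and u'(z) → 0 as z → −∞, then u(z) = 0 for all z ∈ ℝ. In other words, when the linear part at the origin is a center, the planar equation u'' = −u + a·u^k has no nonzero orbit homoclinic to the origin. -/

import Mathlib

open Filter

/-- Proposition 4.7 (nonexistence direction): when the linear part at the
origin is a center, the planar layer equation u'' = −u + a·uᵏ has no nonzero
orbit homoclinic to the origin. -/
theorem gkdv_center_no_homoclinic (k : ℕ) (hk : 2 ≤ k) (a : ℝ)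
    (ha : a = 1 ∨ a = -1) (u : ℝ → ℝ) (hu : ContDiff ℝ 2 u)
    (heq : ∀ z : ℝ, deriv (deriv u) z = -u z + a * u z ^ k)
    (hubot : Tendsto u atBot (nhds 0))
    (hu'bot : Tendsto (deriv u) atBot (nhds 0)) :
    ∀ z : ℝ, u z = 0 := by
  have haa : |a| = 1 := by rcases ha with h | h <;> simp [h]
  set v : ℝ → ℝ := deriv u with hv
  have hu2 : ContDiff ℝ ((1 : WithTop ℕ∞) + 1) u := by
    rw [one_add_one_eq_two]; exact hu
  obtain ⟨hud, -, hvc⟩ := contDiff_succ_iff_deriv.mp hu2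
  have hvd : Differentiable ℝ v := hvc.differentiable one_ne_zero
  have hu' : ∀ z, HasDerivAt u (v z) z := fun z => (hud z).hasDerivAt
  have hv' : ∀ z, HasDerivAt v (-u z + a * u z ^ k) z := fun z => by
    have := (hvd z).hasDerivAt
    rwa [heq z] at this
  -- the energy
  set E : ℝ → ℝ := fun z => v z ^ 2 / 2 + u z ^ 2 / 2 - a * u z ^ (k + 1) / (k + 1) with hE
  have hE' : ∀ z, HasDerivAt E 0 z := by
    intro z
    have h := ((((hv' z).pow 2).div_const 2).add (((hu' z).pow 2).div_const 2)).sub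
      ((((hu' z).pow (k + 1)).const_mul a).div_const (k + 1))
    convert h using 1
    · rfl
    · rfl
    · rfl
    have hk1 : (k : ℝ) + 1 ≠ 0 := by positivity
    push_cast
    field_simp
    ring
  have hEconst : ∀ x y, E x = E y :=
    is_const_of_deriv_eq_zero (fun z => (hE' z).differentiableAt) (fun z => (hE' z).deriv)
  -- E tends to 0 at -infty, hence E ≡ 0
  have hEzero : ∀ z, E z = 0 := by
    have h1 : Tendsto E atBot (nhds ((0 : ℝ) ^ 2 / 2 + 0 ^ 2 / 2 - a * 0 ^ (k + 1) / (k + 1))) := by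
      exact (((hu'bot.pow 2).div_const 2).add ((hubot.pow 2).div_const 2)).sub
        (((hubot.pow (k + 1)).const_mul a).div_const _)
    have h0 : ((0 : ℝ) ^ 2 / 2 + 0 ^ 2 / 2 - a * 0 ^ (k + 1) / (k + 1)) = 0 := by
      simp [zero_pow, Nat.succ_ne_zero]
    rw [h0] at h1
    have h2 : E = fun _ => E 0 := funext fun x => hEconst x 0
    rw [h2] at h1
    have := tendsto_nhds_unique h1 tendsto_const_nhds
    intro z; rw [hEconst z 0, ← this]
  -- small values of u force u = v = 0
  have hsmall : ∀ z, |u z| ≤ 1 / 2 → u z = 0 ∧ v z = 0 := by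
    intro z hz
    have hEz := hEzero z
    have h0 : v z ^ 2 / 2 + u z ^ 2 / 2 = a * u z ^ (k + 1) / (k + 1) := by
      have : E z = v z ^ 2 / 2 + u z ^ 2 / 2 - a * u z ^ (k + 1) / (k + 1) := rfl
      linarith [hEz, this ▸ hEz]
    have habs : a * u z ^ (k + 1) ≤ |u z| ^ (k + 1) := by
      calc a * u z ^ (k + 1) ≤ |a * u z ^ (k + 1)| := le_abs_self _
        _ = |a| * |u z ^ (k + 1)| := abs_mul _ _
        _ = |u z| ^ (k + 1) := by rw [haa, one_mul, abs_pow]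
    have hsplit : |u z| ^ (k + 1) = |u z| ^ 2 * |u z| ^ (k - 1) := by
      rw [← pow_add]
      congr 1
      omega
    have hle1 : |u z| ^ (k - 1) ≤ (1 / 2 : ℝ) ^ (k - 1) :=
      pow_le_pow_left₀ (abs_nonneg _) hz _
    have hle2 : ((1 : ℝ) / 2) ^ (k - 1) ≤ 1 / 2 := by
      calc ((1 : ℝ) / 2) ^ (k - 1) ≤ (1 / 2 : ℝ) ^ 1 :=
        pow_le_pow_of_le_one (by norm_num) (by norm_num) (by omega)
        _ = 1 / 2 := pow_one _
    have hsq : |u z| ^ 2 = u z ^ 2 := sq_abs _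
    have hub : a * u z ^ (k + 1) ≤ u z ^ 2 / 2 := by
      have h1 : |u z| ^ (k + 1) ≤ u z ^ 2 * (1 / 2) := by
        rw [hsplit, hsq]
        exact mul_le_mul_of_nonneg_left (hle1.trans hle2) (sq_nonneg _)
      linarith
    have hk3 : (3 : ℝ) ≤ (k : ℝ) + 1 := by
      have : (2 : ℝ) ≤ (k : ℝ) := by exact_mod_cast hk
      linarith
    have hdiv : a * u z ^ (k + 1) / ((k : ℝ) + 1) ≤ u z ^ 2 / 6 := by
      rcases le_or_gt (a * u z ^ (k + 1)) 0 with hneg | hpos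
      · have : a * u z ^ (k + 1) / ((k : ℝ) + 1) ≤ 0 :=
          div_nonpos_of_nonpos_of_nonneg hneg (by linarith)
        nlinarith [sq_nonneg (u z)]
      · calc a * u z ^ (k + 1) / ((k : ℝ) + 1) ≤ a * u z ^ (k + 1) / 3 := by
              apply div_le_div_of_nonneg_left (le_of_lt hpos) (by norm_num) hk3
          _ ≤ (u z ^ 2 / 2) / 3 := by linarith
          _ = u z ^ 2 / 6 := by ring
    have huz : u z ^ 2 ≤ 0 := by nlinarith [sq_nonneg (v z)]
    have hu0 : u z = 0 := by
      have := le_antisymm huz (sq_nonneg _)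
      exact pow_eq_zero_iff (by norm_num) |>.mp this
    constructor
    · exact hu0
    · have hvz : v z ^ 2 ≤ 0 := by nlinarith
      have := le_antisymm hvz (sq_nonneg _)
      exact pow_eq_zero_iff (by norm_num) |>.mp this
  -- get z0 with u = v = 0 on (-∞, z0]
  have hcv : ∀ᶠ z in atBot, |u z| ≤ 1 / 2 := by
    have := Metric.tendsto_nhds.mp hubot (1 / 2) (by norm_num)
    filter_upwards [this] with z hz
    rw [Real.dist_eq, sub_zero] at hz
    exact hz.le
  obtain ⟨z0, hz0⟩ := eventually_atBot.mp hcv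
  have hzero_le : ∀ z ≤ z0, u z = 0 ∧ v z = 0 := fun z hz => hsmall z (hz0 z hz)
  -- now propagate forward by uniqueness
  intro z
  rcases le_or_gt z z0 with hle | hlt
  · exact (hzero_le z hle).1
  -- setup for ODE uniqueness on [z0, z]
  set f : ℝ → ℝ × ℝ := fun t => (u t, v t) with hf
  have hfc : Continuous f := (hud.continuous.prodMk hvd.continuous)
  obtain ⟨C, hC⟩ := (isCompact_Icc (a := z0) (b := z)).exists_bound_of_continuousOn
    hfc.continuousOn
  set R : ℝ := max C 1 with hR
  have hR1 : (1 : ℝ) ≤ R := le_max_right _ _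
  have hR0 : (0 : ℝ) ≤ R := by linarith
  have hRb : ∀ t ∈ Set.Icc z0 z, ‖f t‖ ≤ R := fun t ht => (hC t ht).trans (le_max_left _ _)
  set V : ℝ × ℝ → ℝ × ℝ := fun p => (p.2, -p.1 + a * p.1 ^ k) with hV
  set K : NNReal := ⟨1 + k * R ^ (k - 1), by positivity⟩ with hK
  have hKc : (K : ℝ) = 1 + k * R ^ (k - 1) := rfl
  have hK1 : (1 : ℝ) ≤ K := by
    rw [hKc]
    have : (0 : ℝ) ≤ (k : ℝ) * R ^ (k - 1) := by positivity
    linarith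
  -- Lipschitz bound for the scalar nonlinearity on [-R, R]
  have hd : ∀ x : ℝ, HasDerivAt (fun y => -y + a * y ^ k) (-1 + a * (k * x ^ (k - 1))) x :=
    fun x => (hasDerivAt_id x).neg.add ((hasDerivAt_pow k x).const_mul a)
  have hscal : ∀ x y : ℝ, |x| ≤ R → |y| ≤ R →
      |(-x + a * x ^ k) - (-y + a * y ^ k)| ≤ (K : ℝ) * |x - y| := by
    intro x y hx hy
    have hbound : ∀ w ∈ Set.Icc (-R) R, ‖deriv (fun y => -y + a * y ^ k) w‖ ≤ (K : ℝ) := by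
      intro w hw
      rw [(hd w).deriv]
      have hwR : |w| ≤ R := abs_le.mpr ⟨hw.1, hw.2⟩
      have h1 : |w| ^ (k - 1) ≤ R ^ (k - 1) := pow_le_pow_left₀ (abs_nonneg _) hwR _
      calc ‖-1 + a * ((k : ℝ) * w ^ (k - 1))‖
          ≤ ‖(-1 : ℝ)‖ + ‖a * ((k : ℝ) * w ^ (k - 1))‖ := norm_add_le _ _
        _ = 1 + |a| * ((k : ℝ) * |w| ^ (k - 1)) := by
            rw [Real.norm_eq_abs, Real.norm_eq_abs, abs_neg, abs_one, abs_mul, abs_mul,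
              Nat.abs_cast, abs_pow]
        _ = 1 + (k : ℝ) * |w| ^ (k - 1) := by rw [haa, one_mul]
        _ ≤ 1 + (k : ℝ) * R ^ (k - 1) := by
            have : (k : ℝ) * |w| ^ (k - 1) ≤ (k : ℝ) * R ^ (k - 1) :=
              mul_le_mul_of_nonneg_left h1 (by positivity)
            linarith
        _ = (K : ℝ) := hKc.symm
    have := Convex.norm_image_sub_le_of_norm_deriv_le
      (f := fun y => -y + a * y ^ k) (C := (K : ℝ))
      (fun w _ => (hd w).differentiableAt) hbound (convex_Icc (-R) R)
      (Set.mem_Icc.mpr ⟨neg_le_of_abs_le hy, le_of_abs_le hy⟩)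
      (Set.mem_Icc.mpr ⟨neg_le_of_abs_le hx, le_of_abs_le hx⟩)
    simpa [Real.norm_eq_abs] using this
  have hlip : LipschitzOnWith K V (Metric.closedBall (0 : ℝ × ℝ) R) := by
    rw [lipschitzOnWith_iff_dist_le_mul]
    intro p hp q hq
    rw [Metric.mem_closedBall, dist_zero_right] at hp hq
    have hp1 : |p.1| ≤ R := (norm_fst_le p).trans hp
    have hq1 : |q.1| ≤ R := (norm_fst_le q).trans hq
    rw [Prod.dist_eq, Prod.dist_eq]
    have hVp1 : dist (V p).1 (V q).1 = dist p.2 q.2 := rfl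
    have hVp2 : dist (V p).2 (V q).2 = |(-p.1 + a * p.1 ^ k) - (-q.1 + a * q.1 ^ k)| :=
      Real.dist_eq _ _
    rw [hVp1, hVp2]
    apply max_le
    · calc dist p.2 q.2 ≤ max (dist p.1 q.1) (dist p.2 q.2) := le_max_right _ _
        _ = 1 * max (dist p.1 q.1) (dist p.2 q.2) := (one_mul _).symm
        _ ≤ (K : ℝ) * max (dist p.1 q.1) (dist p.2 q.2) :=
            mul_le_mul_of_nonneg_right hK1 (le_max_of_le_left dist_nonneg)
    · calc |(-p.1 + a * p.1 ^ k) - (-q.1 + a * q.1 ^ k)| ≤ (K : ℝ) * |p.1 - q.1| :=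
            hscal _ _ hp1 hq1
        _ = (K : ℝ) * dist p.1 q.1 := by rw [Real.dist_eq]
        _ ≤ (K : ℝ) * max (dist p.1 q.1) (dist p.2 q.2) :=
            mul_le_mul_of_nonneg_left (le_max_left _ _) (by positivity)
  -- apply uniqueness
  have hf0 : f z0 = 0 := by
    have := hzero_le z0 le_rfl
    simp [hf, this.1, this.2, Prod.ext_iff]
  have hgderiv : ∀ t ∈ Set.Ico z0 z,
      HasDerivWithinAt (fun _ : ℝ => (0 : ℝ × ℝ)) (V ((fun _ : ℝ => (0 : ℝ × ℝ)) t)) (Set.Ici t) t := by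
    intro t _
    have hV0 : V 0 = 0 := by
      simp [hV, zero_pow (by omega : k ≠ 0), Prod.ext_iff]
    rw [hV0]
    exact (hasDerivAt_const t (0 : ℝ × ℝ)).hasDerivWithinAt
  have huniq := ODE_solution_unique_of_mem_Icc_right
    (v := fun _ => V) (s := fun _ => Metric.closedBall (0 : ℝ × ℝ) R) (K := K)
    (fun _ _ => hlip)
    (hfc.continuousOn)
    (fun t _ => (((hu' t).prodMk (hv' t)).hasDerivWithinAt))
    (fun t ht => by
      rw [Metric.mem_closedBall, dist_zero_right]
      exact hRb t ⟨ht.1, ht.2.le⟩)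
    (continuousOn_const)
    hgderiv
    (fun t _ => Metric.mem_closedBall_self hR0)
    hf0
  have hfin : (u z, v z) = (0 : ℝ × ℝ) := huniq ⟨hlt.le, le_rfl⟩
  exact congrArg Prod.fst hfin
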